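/- Let r ≥ 1 be an integer and let G be a connected subcubic simple graph containing at least one vertex of degree 3. Then there is a locally surjective homomorphism from G to the complete graph K_4 if and only if there is a locally surjective homomorphism from the r-subdivision G^r to the r-subdivision K_4^r. -/

import Mathlib

/-- Representatives of internal vertices of the `k`-subdivision of `G`:
a dart `d` of `G` together with a position `i : Fin k`; the pair `(d, i)` is
identified with `(d.symm, k - 1 - i)`. -/
def SubdivRep {V : Type*} (G : SimpleGraph V) (k : ℕ) :
    G.Dart × Fin k → G.Dart × Fin k → Prop :=
  fun a b => b.1 = a.1.symm ∧ (b.2 : ℕ) = k - 1 - (a.2 : ℕ)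

/-- Internal vertices of the `k`-subdivision of `G`. -/
abbrev SubdivInternal {V : Type*} (G : SimpleGraph V) (k : ℕ) :=
  Quot (SubdivRep G k)

/-- Vertices of the `k`-subdivision of `G`: the branch vertices (`Sum.inl`)
are the original vertices of `G`, and `Sum.inr` are the internal vertices. -/
abbrev SubdivVertex {V : Type*} (G : SimpleGraph V) (k : ℕ) :=
  V ⊕ SubdivInternal G k

/-- One-directional adjacency for the `k`-subdivision: a branch vertex `u` is
adjacent to the first internal vertex of any edge of `G` leaving `u` (via the
identification, also to the last internal vertex of any edge entering `u`),
and consecutive internal vertices on a subdivided edge are adjacent. -/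
def SubdivAdjBase {V : Type*} (G : SimpleGraph V) (k : ℕ) :
    SubdivVertex G k → SubdivVertex G k → Prop
  | Sum.inl u, Sum.inr x =>
      ∃ (d : G.Dart) (i : Fin k), (i : ℕ) = 0 ∧ d.toProd.1 = u ∧
        x = Quot.mk (SubdivRep G k) (d, i)
  | Sum.inr x, Sum.inr y =>
      ∃ (d : G.Dart) (i j : Fin k), (j : ℕ) = (i : ℕ) + 1 ∧
        x = Quot.mk (SubdivRep G k) (d, i) ∧ y = Quot.mk (SubdivRep G k) (d, j)
  | _, _ => False

/-- The `k`-subdivision of a simple graph `G`: every edge `uv` of `G` is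
replaced by a path from `u` to `v` through `k` new internal vertices. -/
def Subdivision {V : Type*} (G : SimpleGraph V) (k : ℕ) :
    SimpleGraph (SubdivVertex G k) where
  Adj x y := x ≠ y ∧ (SubdivAdjBase G k x y ∨ SubdivAdjBase G k y x)
  symm := ⟨fun x y h => ⟨Ne.symm h.1, h.2.symm⟩⟩
  loopless := ⟨fun x h => h.1 rfl⟩

/-- A homomorphism `f : G →g H` is locally bijective if for every vertex `u`
the restriction of `f` to the open neighbourhood of `u`, viewed as a map into
the open neighbourhood of `f u`, is a bijection. -/
def GraphHomLocallyBijective {V W : Type*} {G : SimpleGraph V} {H : SimpleGraph W}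
    (f : G →g H) : Prop :=
  ∀ u : V, Set.BijOn f (G.neighborSet u) (H.neighborSet (f u))

/-- A homomorphism `f : G →g H` is locally surjective if for every vertex `u`
the restriction of `f` to the open neighbourhood of `u`, viewed as a map into
the open neighbourhood of `f u`, is surjective. -/
def GraphHomLocallySurjective {V W : Type*} {G : SimpleGraph V} {H : SimpleGraph W}
    (f : G →g H) : Prop :=
  ∀ u : V, Set.SurjOn f (G.neighborSet u) (H.neighborSet (f u))

/-- A homomorphism `f : G →g H` is locally injective if for every vertex `u`
the restriction of `f` to the open neighbourhood of `u`, viewed as a map into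
the open neighbourhood of `f u`, is injective. -/
def GraphHomLocallyInjective {V W : Type*} {G : SimpleGraph V} {H : SimpleGraph W}
    (f : G →g H) : Prop :=
  ∀ u : V, Set.InjOn f (G.neighborSet u)

namespace SubdivProof

open SimpleGraph

variable {V : Type*} {G : SimpleGraph V} {k : ℕ}

/-- canonical internal vertex -/
abbrev Imk (d : G.Dart) (i : Fin k) : SubdivInternal G k := Quot.mk (SubdivRep G k) (d, i)

lemma dart_symm_ne (d : G.Dart) : d.symm ≠ d := by
  intro h
  have h2 : d.symm.toProd = d.toProd := by rw [h]
  rw [Dart.symm_toProd] at h2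
  have := d.adj.ne
  have h1 : d.toProd.2 = d.toProd.1 := congrArg Prod.fst h2
  exact this (h1.symm)

lemma quot_mk_eq_iff {d e : G.Dart} {i j : Fin k} :
    Imk d i = Imk e j ↔ (e = d ∧ j = i) ∨ (e = d.symm ∧ (j : ℕ) = k - 1 - (i : ℕ)) := by
  constructor
  · intro h
    have hinv : ∀ x y : G.Dart × Fin k, SubdivRep G k x y →
        ((x.1 = d ∧ x.2 = i) ∨ (x.1 = d.symm ∧ (x.2 : ℕ) = k - 1 - (i : ℕ)))
        = ((y.1 = d ∧ y.2 = i) ∨ (y.1 = d.symm ∧ (y.2 : ℕ) = k - 1 - (i : ℕ))) := by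
      rintro ⟨d1, i1⟩ ⟨d2, i2⟩ ⟨h1, h2⟩
      dsimp only at h1 h2 ⊢
      have hd : d1 = d2.symm := by rw [h1, Dart.symm_symm]
      have hi := i.isLt
      have hi1 := i1.isLt
      have hi2 := i2.isLt
      apply propext
      constructor
      · rintro (⟨h3, h4⟩ | ⟨h3, h4⟩)
        · have h4' : (i1 : ℕ) = (i : ℕ) := congrArg Fin.val h4
          exact Or.inr ⟨by rw [h1, h3], by omega⟩
        · refine Or.inl ⟨by rw [h1, h3, Dart.symm_symm], Fin.ext (by omega)⟩
      · rintro (⟨h3, h4⟩ | ⟨h3, h4⟩)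
        · have h4' : (i2 : ℕ) = (i : ℕ) := congrArg Fin.val h4
          exact Or.inr ⟨by rw [hd, h3], by omega⟩
        · refine Or.inl ⟨by rw [hd, h3, Dart.symm_symm], Fin.ext (by omega)⟩
    have key : Quot.lift
        (fun x : G.Dart × Fin k => (x.1 = d ∧ x.2 = i) ∨ (x.1 = d.symm ∧ (x.2 : ℕ) = k - 1 - (i : ℕ)))
        hinv (Imk e j) := by
      rw [← h]
      exact Or.inl ⟨rfl, rfl⟩
    exact key
  · rintro (⟨rfl, rfl⟩ | ⟨h1, h2⟩)
    · rfl
    · exact Quot.sound (⟨h1, h2⟩ : SubdivRep G k (d, i) (e, j))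

lemma imk_self_of_symm {d : G.Dart} {i j : Fin k} (hj : (j : ℕ) = k - 1 - (i : ℕ)) :
    Imk d i = Imk d.symm j :=
  quot_mk_eq_iff.mpr (Or.inr ⟨rfl, hj⟩)

lemma adj_inl_inl {u v : V} : ¬ (Subdivision G k).Adj (Sum.inl u) (Sum.inl v) := by
  rintro ⟨-, h | h⟩ <;> exact h

lemma adj_inl_inr_iff {u : V} {x : SubdivInternal G k} :
    (Subdivision G k).Adj (Sum.inl u) (Sum.inr x) ↔
      ∃ (d : G.Dart) (i : Fin k), (i : ℕ) = 0 ∧ d.toProd.1 = u ∧ x = Imk d i := by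
  constructor
  · rintro ⟨-, h | h⟩
    · exact h
    · exact h.elim
  · intro h
    exact ⟨by simp, Or.inl h⟩

lemma adj_inr_inr_iff {x y : SubdivInternal G k} :
    (Subdivision G k).Adj (Sum.inr x) (Sum.inr y) ↔
      ∃ (d : G.Dart) (i j : Fin k), (j : ℕ) = (i : ℕ) + 1 ∧ x = Imk d i ∧ y = Imk d j := by
  constructor
  · rintro ⟨-, h | h⟩
    · exact h
    · obtain ⟨d, i, j, hj, hy, hx⟩ := h
      have hik := i.isLt
      have hjk := j.isLt
      refine ⟨d.symm, ⟨k - 1 - (j : ℕ), by omega⟩, ⟨k - 1 - (i : ℕ), by omega⟩, by simp; omega, ?_, ?_⟩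
      · rw [hx]; exact imk_self_of_symm (by simp)
      · rw [hy]; exact imk_self_of_symm (by simp)
  · rintro ⟨d, i, j, hj, rfl, rfl⟩
    refine ⟨?_, Or.inl ⟨d, i, j, hj, rfl, rfl⟩⟩
    intro hcon
    have h2 : Imk d i = Imk d j := Sum.inr.inj hcon
    rcases quot_mk_eq_iff.mp h2 with ⟨-, h3⟩ | ⟨h3, -⟩
    · have := congrArg Fin.val h3
      omega
    · exact dart_symm_ne d h3.symm

/-- The neighbour of an internal vertex towards the tail of its dart. -/
def prevV (d : G.Dart) (i : Fin k) : SubdivVertex G k :=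
  if h : (i : ℕ) = 0 then Sum.inl d.toProd.1
  else Sum.inr (Imk d ⟨(i : ℕ) - 1, by have := i.isLt; omega⟩)

/-- The neighbour of an internal vertex towards the head of its dart. -/
def nextV (d : G.Dart) (i : Fin k) : SubdivVertex G k :=
  if h : (i : ℕ) = k - 1 then Sum.inl d.toProd.2
  else Sum.inr (Imk d ⟨(i : ℕ) + 1, by have := i.isLt; omega⟩)

lemma prevV_adj (d : G.Dart) (i : Fin k) :
    (Subdivision G k).Adj (Sum.inr (Imk d i)) (prevV d i) := by
  unfold prevV
  split_ifs with h
  · exact (adj_inl_inr_iff.mpr ⟨d, i, h, rfl, rfl⟩).symm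
  · have hik := i.isLt
    exact (adj_inr_inr_iff.mpr ⟨d, ⟨(i : ℕ) - 1, by omega⟩, i, by simp; omega, rfl, rfl⟩).symm

lemma nextV_adj (d : G.Dart) (i : Fin k) :
    (Subdivision G k).Adj (Sum.inr (Imk d i)) (nextV d i) := by
  unfold nextV
  split_ifs with h
  · have hik := i.isLt
    refine ((adj_inl_inr_iff.mpr ⟨d.symm, ⟨k - 1 - (i : ℕ), by omega⟩, by simp; omega, rfl, ?_⟩)).symm
    exact imk_self_of_symm (by simp)
  · have hik := i.isLt
    exact adj_inr_inr_iff.mpr ⟨d, i, ⟨(i : ℕ) + 1, by omega⟩, by simp, rfl, rfl⟩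

lemma prevV_ne_nextV (d : G.Dart) (i : Fin k) : prevV d i ≠ nextV d i := by
  unfold prevV nextV
  split_ifs with h1 h2 h2
  · intro hcon
    exact d.adj.ne (Sum.inl.inj hcon)
  · simp
  · simp
  · intro hcon
    have h2 : Imk d ⟨(i : ℕ) - 1, _⟩ = Imk d ⟨(i : ℕ) + 1, _⟩ := Sum.inr.inj hcon
    have hik := i.isLt
    rcases quot_mk_eq_iff.mp h2 with ⟨-, h3⟩ | ⟨h3, -⟩
    · have := congrArg Fin.val h3
      simp at this
      omega
    · exact dart_symm_ne d h3.symm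

lemma neighborSet_inr (d : G.Dart) (i : Fin k) :
    (Subdivision G k).neighborSet (Sum.inr (Imk d i)) = {prevV d i, nextV d i} := by
  apply Set.eq_of_subset_of_subset
  · intro z hz
    have hik := i.isLt
    simp only [SimpleGraph.mem_neighborSet] at hz
    match z with
    | Sum.inl u =>
      have h := adj_inl_inr_iff.mp hz.symm
      obtain ⟨e, i0, h0, hfst, hx⟩ := h
      rcases quot_mk_eq_iff.mp hx with ⟨he, hi0⟩ | ⟨he, hval⟩
      · left
        have hi00 : (i : ℕ) = 0 := by rw [← congrArg Fin.val hi0]; exact h0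
        rw [prevV, dif_pos hi00, ← hfst, he]
      · right
        have hikk : (i : ℕ) = k - 1 := by omega
        rw [nextV, dif_pos hikk, ← hfst, he]
        rfl
    | Sum.inr y =>
      obtain ⟨e, a, b, hb, hx, hy⟩ := adj_inr_inr_iff.mp hz
      have hak := a.isLt
      have hbk := b.isLt
      rcases quot_mk_eq_iff.mp hx with ⟨he, ha⟩ | ⟨he, hval⟩
      · right
        have hai : (a : ℕ) = (i : ℕ) := congrArg Fin.val ha
        have hne : (i : ℕ) ≠ k - 1 := by omega
        rw [nextV, dif_neg hne, hy, he]
        have : b = (⟨(i : ℕ) + 1, by omega⟩ : Fin k) := Fin.ext (by simp [hb, hai])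
        rw [this]
        exact rfl
      · left
        have hne : (i : ℕ) ≠ 0 := by omega
        rw [prevV, dif_neg hne, hy, he]
        exact congrArg Sum.inr (imk_self_of_symm (by simp; omega)).symm
  · intro z hz
    rcases hz with rfl | rfl
    · exact prevV_adj d i
    · exact nextV_adj d i

lemma neighborSet_inl (u : V) :
    (Subdivision G k).neighborSet (Sum.inl u) =
      {z | ∃ (d : G.Dart) (i : Fin k), (i : ℕ) = 0 ∧ d.toProd.1 = u ∧ z = Sum.inr (Imk d i)} := by
  ext z
  simp only [SimpleGraph.mem_neighborSet, Set.mem_setOf_eq]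
  match z with
  | Sum.inl v =>
    simp only [iff_false_intro adj_inl_inl, false_iff]
    rintro ⟨d, i, -, -, h⟩
    exact absurd h (by simp)
  | Sum.inr x =>
    rw [adj_inl_inr_iff]
    constructor
    · rintro ⟨d, i, h0, hfst, rfl⟩
      exact ⟨d, i, h0, hfst, rfl⟩
    · rintro ⟨d, i, h0, hfst, h⟩
      exact ⟨d, i, h0, hfst, Sum.inr.inj h⟩

section Conn

lemma reach_internal (d : G.Dart) : ∀ (n : ℕ) (hn : n < k),
    (Subdivision G k).Reachable (Sum.inl d.toProd.1) (Sum.inr (Imk d ⟨n, hn⟩))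
  | 0, hn => (adj_inl_inr_iff.mpr ⟨d, ⟨0, hn⟩, rfl, rfl, rfl⟩).reachable
  | (n + 1), hn =>
      (reach_internal d n (by omega)).trans
        (adj_inr_inr_iff.mpr ⟨d, ⟨n, by omega⟩, ⟨n + 1, hn⟩, rfl, rfl, rfl⟩).reachable

lemma reach_ends (hk : 0 < k) (d : G.Dart) :
    (Subdivision G k).Reachable (Sum.inl d.toProd.1) (Sum.inl d.toProd.2) := by
  refine (reach_internal d (k - 1) (by omega)).trans ?_
  have h := nextV_adj d (⟨k - 1, by omega⟩ : Fin k)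
  rw [nextV, dif_pos rfl] at h
  exact h.reachable

lemma reach_inl_inl (hk : 0 < k) (hG : G.Preconnected) (u v : V) :
    (Subdivision G k).Reachable (Sum.inl u) (Sum.inl v) := by
  have h := hG u v
  rw [SimpleGraph.reachable_iff_reflTransGen] at h
  induction h with
  | refl => exact SimpleGraph.Reachable.refl _
  | @tail b c hr hadj ih =>
      exact ih.trans (reach_ends hk (⟨(b, c), hadj⟩ : G.Dart))

lemma subdiv_connected (hk : 0 < k) (hG : G.Connected) : (Subdivision G k).Connected := by
  have hne : Nonempty V := hG.nonempty
  have hne2 : Nonempty (SubdivVertex G k) := ⟨Sum.inl (Classical.arbitrary V)⟩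
  refine ⟨?_⟩
  have hbranch : ∀ (u : V) (z : SubdivVertex G k),
      (Subdivision G k).Reachable (Sum.inl u) z := by
    intro u z
    match z with
    | Sum.inl v => exact reach_inl_inl hk hG.preconnected u v
    | Sum.inr w =>
        obtain ⟨⟨d, i⟩, rfl⟩ := Quot.exists_rep w
        refine (reach_inl_inl hk hG.preconnected u d.toProd.1).trans ?_
        have h := reach_internal d (i : ℕ) i.isLt
        simpa using h
  intro x y
  match x with
  | Sum.inl u => exact hbranch u y
  | Sum.inr w =>
      obtain ⟨⟨d, i⟩, rfl⟩ := Quot.exists_rep w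
      exact ((hbranch d.toProd.1 (Sum.inr (Quot.mk _ (d, i)))).symm).trans (hbranch d.toProd.1 y)

end Conn

section Surj

lemma hom_surjective {α β : Type*} {A : SimpleGraph α} {B : SimpleGraph β} (F : A →g B)
    (hF : GraphHomLocallySurjective F) (hB : B.Preconnected) (x0 : α) :
    Function.Surjective F := by
  intro y
  have h := hB (F x0) y
  rw [SimpleGraph.reachable_iff_reflTransGen] at h
  clear hB
  induction h with
  | refl => exact ⟨x0, rfl⟩
  | @tail b c hr hadj ih =>
      obtain ⟨x, rfl⟩ := ih
      obtain ⟨z, -, hz2⟩ := hF x hadj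
      exact ⟨z, hz2⟩

end Surj

section Propagate

variable {W : Type*} {H : SimpleGraph W}

lemma step_lemma (F : Subdivision G k →g Subdivision H k) (hF : GraphHomLocallySurjective F)
    (d : G.Dart) (e : H.Dart) (i : Fin k)
    (h1 : F (Sum.inr (Imk d i)) = Sum.inr (Imk e i))
    (h2 : F (prevV d i) = prevV e i) :
    F (nextV d i) = nextV e i := by
  have hmem : nextV e i ∈ (Subdivision H k).neighborSet (F (Sum.inr (Imk d i))) := by
    rw [h1]
    exact nextV_adj e i
  obtain ⟨z, hz, hzval⟩ := hF _ hmem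
  rw [neighborSet_inr] at hz
  rcases hz with rfl | rfl
  · exact absurd (h2 ▸ hzval) (prevV_ne_nextV e i)
  · exact hzval

lemma propagate (hk : 0 < k) (F : Subdivision G k →g Subdivision H k)
    (hF : GraphHomLocallySurjective F) (d : G.Dart) (e : H.Dart)
    (h0 : F (Sum.inl d.toProd.1) = Sum.inl e.toProd.1)
    (h1 : F (Sum.inr (Imk d ⟨0, hk⟩)) = Sum.inr (Imk e ⟨0, hk⟩)) :
    F (Sum.inl d.toProd.2) = Sum.inl e.toProd.2 := by
  have main : ∀ (n : ℕ) (hn : n < k),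
      F (Sum.inr (Imk d ⟨n, hn⟩)) = Sum.inr (Imk e ⟨n, hn⟩) ∧
        F (prevV d ⟨n, hn⟩) = prevV e ⟨n, hn⟩ := by
    intro n
    induction n with
    | zero =>
        intro hn
        refine ⟨h1, ?_⟩
        rw [prevV, prevV, dif_pos rfl, dif_pos rfl]
        exact h0
    | succ m ih =>
        intro hn
        obtain ⟨ih1, ih2⟩ := ih (by omega)
        have hstep := step_lemma F hF d e ⟨m, by omega⟩ ih1 ih2
        have hm1 : ((⟨m, by omega⟩ : Fin k) : ℕ) ≠ k - 1 := by simp; omega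
        rw [nextV, nextV, dif_neg hm1, dif_neg hm1] at hstep
        constructor
        · exact hstep
        · have hm0 : ((⟨m + 1, hn⟩ : Fin k) : ℕ) ≠ 0 := by simp
          rw [prevV, prevV, dif_neg hm0, dif_neg hm0]
          simpa using ih1
  obtain ⟨m1, m2⟩ := main (k - 1) (by omega)
  have hstep := step_lemma F hF d e ⟨k - 1, by omega⟩ m1 m2
  rw [nextV, nextV, dif_pos rfl, dif_pos rfl] at hstep
  exact hstep

lemma exists_e (hk : 0 < k) (F : Subdivision G k →g Subdivision H k)
    {u : V} {c : W} (hu : F (Sum.inl u) = Sum.inl c) (d : G.Dart) (hd : d.toProd.1 = u) :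
    ∃ e : H.Dart, e.toProd.1 = c ∧
      F (Sum.inr (Imk d ⟨0, hk⟩)) = Sum.inr (Imk e ⟨0, hk⟩) := by
  have hadj : (Subdivision G k).Adj (Sum.inl u) (Sum.inr (Imk d ⟨0, hk⟩)) :=
    adj_inl_inr_iff.mpr ⟨d, ⟨0, hk⟩, rfl, hd, rfl⟩
  have hadj2 := F.map_adj hadj
  rw [hu] at hadj2
  match hFx : F (Sum.inr (Imk d ⟨0, hk⟩)) with
  | Sum.inl v => rw [hFx] at hadj2; exact absurd hadj2 adj_inl_inl
  | Sum.inr x =>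
      rw [hFx] at hadj2
      obtain ⟨e, i0, h00, hefst, hx⟩ := adj_inl_inr_iff.mp hadj2
      have : i0 = ⟨0, hk⟩ := Fin.ext h00
      rw [this] at hx
      exact ⟨e, hefst, by rw [hx]⟩

lemma all_branch (hk : 0 < k) (hG : G.Preconnected) (F : Subdivision G k →g Subdivision H k)
    (hF : GraphHomLocallySurjective F) {u0 : V} {c0 : W}
    (h0 : F (Sum.inl u0) = Sum.inl c0) :
    ∀ u : V, ∃ c : W, F (Sum.inl u) = Sum.inl c := by
  intro u
  have h := hG u0 u
  rw [SimpleGraph.reachable_iff_reflTransGen] at h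
  induction h with
  | refl => exact ⟨c0, h0⟩
  | @tail b c hr hadj ih =>
      obtain ⟨cb, hcb⟩ := ih
      obtain ⟨e, he1, he2⟩ := exists_e hk F hcb (⟨(b, c), hadj⟩ : G.Dart) rfl
      refine ⟨e.toProd.2, ?_⟩
      exact propagate hk F hF (⟨(b, c), hadj⟩ : G.Dart) e (by rw [he1]; exact hcb) he2

end Propagate

section Internal

abbrev K4 : SimpleGraph (Fin 4) := completeGraph (Fin 4)

lemma fin4_facts : ∀ c : Fin 4, c + 1 ≠ c ∧ c + 2 ≠ c ∧ c + 3 ≠ c ∧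
    c + 1 ≠ c + 2 ∧ c + 1 ≠ c + 3 ∧ c + 2 ≠ c + 3 := by decide

lemma dart_eq_of_imk_eq (hk : 0 < k) {a b : G.Dart} {c : V}
    (ha : a.toProd.1 = c) (hb : b.toProd.1 = c)
    (h : Imk a ⟨0, hk⟩ = Imk b ⟨0, hk⟩) : a = b := by
  rcases quot_mk_eq_iff.mp h with ⟨h1, -⟩ | ⟨h1, -⟩
  · exact h1.symm
  · exfalso
    have : b.toProd.1 = a.toProd.2 := by rw [h1]; rfl
    exact a.adj.ne (ha.trans (hb.symm.trans this))

lemma internal_to_internal (hk : 0 < k) (F : Subdivision G k →g Subdivision K4 k)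
    (hF : GraphHomLocallySurjective F) (w : SubdivInternal G k) :
    ∃ w', F (Sum.inr w) = Sum.inr w' := by
  match hFw : F (Sum.inr w) with
  | Sum.inr w' => exact ⟨w', rfl⟩
  | Sum.inl c =>
    exfalso
    obtain ⟨⟨d, i⟩, rfl⟩ := Quot.exists_rep w
    obtain ⟨hn1, hn2, hn3, hd12, hd13, hd23⟩ := fin4_facts c
    let e1 : K4.Dart := ⟨(c, c + 1), Ne.symm hn1⟩
    let e2 : K4.Dart := ⟨(c, c + 2), Ne.symm hn2⟩
    let e3 : K4.Dart := ⟨(c, c + 3), Ne.symm hn3⟩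
    have hsurj := hF (Sum.inr (Quot.mk _ (d, i)))
    rw [hFw] at hsurj
    have hy : ∀ e : K4.Dart, e.toProd.1 = c →
        Sum.inr (Imk e ⟨0, hk⟩) ∈ (Subdivision K4 k).neighborSet (Sum.inl c) :=
      fun e he => adj_inl_inr_iff.mpr ⟨e, ⟨0, hk⟩, rfl, he, rfl⟩
    obtain ⟨z1, hm1, hv1⟩ := hsurj (hy e1 rfl)
    obtain ⟨z2, hm2, hv2⟩ := hsurj (hy e2 rfl)
    obtain ⟨z3, hm3, hv3⟩ := hsurj (hy e3 rfl)
    rw [neighborSet_inr d i] at hm1 hm2 hm3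
    simp only [Set.mem_insert_iff, Set.mem_singleton_iff] at hm1 hm2 hm3
    have key : ∀ (a b : K4.Dart), a.toProd.1 = c → b.toProd.1 = c →
        (Sum.inr (Imk a (⟨0, hk⟩ : Fin k)) : SubdivVertex K4 k) = Sum.inr (Imk b (⟨0, hk⟩ : Fin k)) → a = b :=
      fun a b ha hb h => dart_eq_of_imk_eq hk ha hb (Sum.inr.inj h)
    have hzeq : z1 = z2 ∨ z1 = z3 ∨ z2 = z3 := by
      rcases hm1 with rfl | rfl <;> rcases hm2 with rfl | rfl <;> rcases hm3 with rfl | rfl <;> tauto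
    rcases hzeq with h | h | h
    · have := key e1 e2 rfl rfl (by rw [← hv1, ← hv2, h])
      exact hd12 (congrArg (fun x => x.toProd.2) this)
    · have := key e1 e3 rfl rfl (by rw [← hv1, ← hv3, h])
      exact hd13 (congrArg (fun x => x.toProd.2) this)
    · have := key e2 e3 rfl rfl (by rw [← hv2, ← hv3, h])
      exact hd23 (congrArg (fun x => x.toProd.2) this)

end Internal

section Forward

variable {W : Type*} {H : SimpleGraph W}

/-- Image of a dart under a graph homomorphism. -/
def dmap (f : G →g H) (d : G.Dart) : H.Dart :=
  ⟨(f d.toProd.1, f d.toProd.2), f.map_adj d.adj⟩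

lemma dmap_symm (f : G →g H) (d : G.Dart) : dmap f d.symm = (dmap f d).symm := rfl

/-- The subdivision of a graph homomorphism, on vertices. -/
def fwdMap (f : G →g H) : SubdivVertex G k → SubdivVertex H k :=
  Sum.map f (Quot.lift (fun a => Imk (dmap f a.1) a.2) (by
    rintro ⟨d1, i1⟩ ⟨d2, i2⟩ ⟨h1, h2⟩
    dsimp only at h1 h2 ⊢
    rw [h1, dmap_symm]
    exact imk_self_of_symm h2))

/-- The subdivision of a graph homomorphism. -/
def fwdHom (f : G →g H) : Subdivision G k →g Subdivision H k :=
  ⟨fwdMap f, by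
    intro a b hab
    match a, b with
    | Sum.inl u, Sum.inl v => exact absurd hab adj_inl_inl
    | Sum.inl u, Sum.inr x =>
        obtain ⟨d, i, h0, hfst, rfl⟩ := adj_inl_inr_iff.mp hab
        exact adj_inl_inr_iff.mpr ⟨dmap f d, i, h0, by rw [← hfst]; rfl, rfl⟩
    | Sum.inr x, Sum.inl u =>
        obtain ⟨d, i, h0, hfst, rfl⟩ := adj_inl_inr_iff.mp hab.symm
        exact (adj_inl_inr_iff.mpr ⟨dmap f d, i, h0, by rw [← hfst]; rfl, rfl⟩).symm
    | Sum.inr x, Sum.inr y =>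
        obtain ⟨d, i, j, hj, rfl, rfl⟩ := adj_inr_inr_iff.mp hab
        exact adj_inr_inr_iff.mpr ⟨dmap f d, i, j, hj, rfl, rfl⟩⟩

lemma fwdHom_LS (f : G →g H) (hf : GraphHomLocallySurjective f) :
    GraphHomLocallySurjective (fwdHom (k := k) f) := by
  intro a
  match a with
  | Sum.inl u =>
      intro y hy
      have hy' : y ∈ (Subdivision H k).neighborSet (Sum.inl (f u)) := hy
      rw [neighborSet_inl] at hy'
      obtain ⟨e, i, h0, hefst, rfl⟩ := hy'
      have he2 : e.toProd.2 ∈ H.neighborSet (f u) := by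
        rw [SimpleGraph.mem_neighborSet, ← hefst]
        exact e.adj
      obtain ⟨w, hw, hfw⟩ := hf u he2
      have hadj : G.Adj u w := hw
      refine ⟨Sum.inr (Imk (⟨(u, w), hadj⟩ : G.Dart) i), ?_, ?_⟩
      · exact adj_inl_inr_iff.mpr ⟨⟨(u, w), hadj⟩, i, h0, rfl, rfl⟩
      · show Sum.inr (Imk (dmap f ⟨(u, w), hadj⟩) i) = Sum.inr (Imk e i)
        have hde : dmap f ⟨(u, w), hadj⟩ = e := Dart.ext _ _ (Prod.ext hefst.symm hfw)
        rw [hde]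
  | Sum.inr w =>
      obtain ⟨⟨d, i⟩, rfl⟩ := Quot.exists_rep w
      intro y hy
      have hy' : y ∈ (Subdivision H k).neighborSet (Sum.inr (Imk (dmap f d) i)) := hy
      rw [neighborSet_inr] at hy'
      have hpre : (fwdHom (k := k) f) (prevV d i) = prevV (dmap f d) i := by
        unfold prevV
        split_ifs with h
        · rfl
        · rfl
      have hnex : (fwdHom (k := k) f) (nextV d i) = nextV (dmap f d) i := by
        unfold nextV
        split_ifs with h
        · rfl
        · rfl
      rcases hy' with rfl | rfl
      · exact ⟨prevV d i, prevV_adj d i, hpre⟩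
      · exact ⟨nextV d i, nextV_adj d i, hnex⟩

end Forward

section Backward

lemma backward (hk : 0 < k) (hconn : G.Connected)
    (F : Subdivision G k →g Subdivision K4 k) (hF : GraphHomLocallySurjective F) :
    ∃ f : G →g K4, GraphHomLocallySurjective f := by
  have hne : Nonempty V := hconn.nonempty
  have hK4conn : (Subdivision K4 k).Connected :=
    subdiv_connected hk (by have h4 : K4 = ⊤ := completeGraph_eq_top _; rw [h4]; exact SimpleGraph.connected_top)
  have hsurj := hom_surjective F hF hK4conn.preconnected (Sum.inl (Classical.arbitrary V))
  obtain ⟨x0, hx0⟩ := hsurj (Sum.inl (0 : Fin 4))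
  obtain ⟨u0, c0, h00⟩ : ∃ (u0 : V) (c0 : Fin 4), F (Sum.inl u0) = Sum.inl c0 := by
    match x0, hx0 with
    | Sum.inl u0, hx0 => exact ⟨u0, 0, hx0⟩
    | Sum.inr w, hx0 =>
        obtain ⟨w', hw'⟩ := internal_to_internal hk F hF w
        rw [hw'] at hx0
        exact absurd hx0 (by simp)
  have hall := all_branch hk hconn.preconnected F hF h00
  choose f hfspec using hall
  have hhom : ∀ {u v : V}, G.Adj u v → K4.Adj (f u) (f v) := by
    intro u v huv
    obtain ⟨e, he1, he2⟩ := exists_e hk F (hfspec u) (⟨(u, v), huv⟩ : G.Dart) rfl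
    have hv := propagate hk F hF (⟨(u, v), huv⟩ : G.Dart) e (by rw [he1]; exact hfspec u) he2
    have hfu : f u = e.toProd.1 := he1.symm
    have hfv : f v = e.toProd.2 := Sum.inl.inj ((hfspec v).symm.trans hv)
    rw [hfu, hfv]
    exact e.adj
  refine ⟨⟨f, hhom⟩, ?_⟩
  intro u c' hc'
  have hadjc : K4.Adj (f u) c' := hc'
  have hymem : Sum.inr (Imk (⟨(f u, c'), hadjc⟩ : K4.Dart) ⟨0, hk⟩) ∈
      (Subdivision K4 k).neighborSet (F (Sum.inl u)) := by
    rw [hfspec u]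
    exact adj_inl_inr_iff.mpr ⟨⟨(f u, c'), hadjc⟩, ⟨0, hk⟩, rfl, rfl, rfl⟩
  obtain ⟨z, hzmem, hzval⟩ := hF (Sum.inl u) hymem
  rw [neighborSet_inl] at hzmem
  obtain ⟨d, i, hi0, hdfst, rfl⟩ := hzmem
  have hi : i = ⟨0, hk⟩ := Fin.ext hi0
  rw [hi] at hzval
  have hprop := propagate hk F hF d (⟨(f u, c'), hadjc⟩ : K4.Dart)
    (by rw [hdfst]; exact hfspec u) hzval
  refine ⟨d.toProd.2, ?_, ?_⟩
  · show d.toProd.2 ∈ G.neighborSet u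
    rw [SimpleGraph.mem_neighborSet, ← hdfst]
    exact d.adj
  · exact Sum.inl.inj ((hfspec d.toProd.2).symm.trans hprop)

end Backward

end SubdivProof

/-- Let `r ≥ 1` and let `G` be a connected subcubic graph with at least one
vertex of degree 3.  Then there is a locally surjective homomorphism from `G`
to `K₄` if and only if there is one from `G^r` to `K₄^r`. -/
theorem statement4 {V : Type*} [Fintype V] (G : SimpleGraph V)
    [DecidableRel G.Adj] (r : ℕ) (hr : 1 ≤ r) (hconn : G.Connected)
    (hcubic : ∀ v : V, G.degree v ≤ 3) (hdeg3 : ∃ v : V, G.degree v = 3) :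
    (∃ f : G →g SimpleGraph.completeGraph (Fin 4), GraphHomLocallySurjective f) ↔
      (∃ f : Subdivision G r →g Subdivision (SimpleGraph.completeGraph (Fin 4)) r,
        GraphHomLocallySurjective f) := by
  constructor
  · rintro ⟨f, hf⟩
    exact ⟨SubdivProof.fwdHom f, SubdivProof.fwdHom_LS f hf⟩
  · rintro ⟨F, hF⟩
    exact SubdivProof.backward hr hconn F hF
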